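/- Let G be a simple graph on a finite vertex type and let v be a vertex of G. Then the permanental polynomial of the adjacency matrix satisfies ψ(A(G)) = x·ψ(A(G − v)) + Σ_{u ∈ N(v)} ψ(A(G − u − v)) + 2·Σ_{C ∈ 𝔠_G(v)} (−1)^{|V(C)|}·ψ(A(G − V(C))). -/

import Mathlib

open Polynomial Matrix

attribute [local instance] Classical.propDecidable

noncomputable section

/-- The permanent of a square matrix: `per M = ∑_{σ} ∏_i M i (σ i)`. -/
def Matrix.per {n R : Type*} [Fintype n] [DecidableEq n] [CommRing R]
    (M : Matrix n n R) : R :=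
  ∑ σ : Equiv.Perm n, ∏ i, M i (σ i)

/-- The characteristic polynomial `φ(M) = det (x·I - M)`. -/
def phi {n R : Type*} [Fintype n] [DecidableEq n] [CommRing R]
    (M : Matrix n n (Polynomial R)) : Polynomial R :=
  ((Polynomial.X : Polynomial R) • (1 : Matrix n n (Polynomial R)) - M).det

/-- The permanental polynomial `ψ(M) = per (x·I - M)`. -/
def psi {n R : Type*} [Fintype n] [DecidableEq n] [CommRing R]
    (M : Matrix n n (Polynomial R)) : Polynomial R :=
  ((Polynomial.X : Polynomial R) • (1 : Matrix n n (Polynomial R)) - M).per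

variable {V : Type*}

/-- The principal submatrix of `M` obtained by deleting the rows and columns indexed by `S`. -/
def delSub {R : Type*} (M : Matrix V V R) (S : Set V) :
    Matrix {w : V // w ∉ S} {w : V // w ∉ S} R :=
  M.submatrix Subtype.val Subtype.val

/-- `C` is a cycle of `G`: a subgraph of `G` that is connected, has nonempty vertex set,
and in which every vertex of `C` has degree exactly `2` in `C`. -/
def IsCycleSub (G : SimpleGraph V) (C : G.Subgraph) : Prop :=
  C.Connected ∧ C.verts.Nonempty ∧ ∀ w ∈ C.verts, (C.neighborSet w).ncard = 2

variable [Fintype V] [DecidableEq V]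

/-- The degree diagonal matrix `D(G)` of a graph. -/
def degMat (R : Type*) [CommRing R] (G : SimpleGraph V) [DecidableRel G.Adj] :
    Matrix V V R :=
  Matrix.diagonal fun w => (G.degree w : R)
section Part1

open Equiv Equiv.Perm Finset

variable {R : Type*} [CommRing R] {V : Type*} [Fintype V] [DecidableEq V]

/-- A "v-cycle": identity or a cycle moving `v`. -/
def vCyc (v : V) (c : Equiv.Perm V) : Prop := c = 1 ∨ (c.IsCycle ∧ c v ≠ v)

lemma delSub_smul_one_sub (A : Matrix V V (Polynomial R)) (S : Set V) :
    delSub ((Polynomial.X : Polynomial R) • (1 : Matrix V V (Polynomial R)) - A) S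
      = (Polynomial.X : Polynomial R) • 1 - delSub A S := by
  refine Matrix.ext fun i j => ?_
  by_cases h : i = j
  · simp [delSub, Matrix.submatrix_apply, Matrix.one_apply, h]
  · simp only [delSub, Matrix.submatrix_apply, Matrix.sub_apply, Matrix.smul_apply,
      Matrix.one_apply, if_neg h, if_neg (fun h' => h (Subtype.ext h')), smul_zero]

lemma psi_delSub (A : Matrix V V (Polynomial R)) (S : Set V) :
    psi (delSub A S) =
      (delSub ((Polynomial.X : Polynomial R) • (1 : Matrix V V (Polynomial R)) - A) S).per := by
  rw [psi, delSub_smul_one_sub]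

lemma psi_irrel {n : Type*} {ft ft' : Fintype n} {de de' : DecidableEq n}
    (M : Matrix n n (Polynomial R)) :
    @psi n R ft de _ M = @psi n R ft' de' _ M := by
  have h1 : ft = ft' := Subsingleton.elim _ _
  have h2 : de = de' := by
    funext a b
    exact Subsingleton.elim _ _
  subst h1; subst h2; rfl

lemma per_irrel {n : Type*} {ft ft' : Fintype n} {de de' : DecidableEq n} (M : Matrix n n R) :
    @Matrix.per n R ft de _ M = @Matrix.per n R ft' de' _ M := by
  have h1 : ft = ft' := Subsingleton.elim _ _
  have h2 : de = de' := by
    funext a b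
    exact Subsingleton.elim _ _
  subst h1; subst h2; rfl

lemma psi_delSub_congr (A : Matrix V V (Polynomial R)) {S S' : Set V} (h : S = S')
    {ft : Fintype {w : V // w ∉ S}} {de : DecidableEq {w : V // w ∉ S}}
    {ft' : Fintype {w : V // w ∉ S'}} {de' : DecidableEq {w : V // w ∉ S'}} :
    @psi _ R ft de _ (delSub A S) = @psi _ R ft' de' _ (delSub A S') := by
  subst h
  have h1 : ft = ft' := Subsingleton.elim _ _
  have h2 : de = de' := by
    funext a b
    exact Subsingleton.elim _ _
  subst h1; subst h2; rfl

lemma sum_fixing_eq_per (M : Matrix V V R) (S : Finset V) :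
    ∑ τ ∈ Finset.univ.filter (fun τ : Equiv.Perm V => ∀ a ∈ S, τ a = a),
      ∏ i ∈ Sᶜ, M i (τ i) = (delSub M (↑S : Set V)).per := by
  classical
  rw [Matrix.per]
  have hp : ∀ x : V, x ∈ Sᶜ ↔ x ∉ (↑S : Set V) := by simp
  refine Finset.sum_bij'
    (fun τ hτ => τ.subtypePerm (p := fun w => w ∉ (↑S : Set V)) ?_)
    (fun σ _ => Equiv.Perm.ofSubtype σ) ?_ ?_ ?_ ?_ ?_
  · intro x
    simp only [Finset.mem_filter, Finset.mem_univ, true_and] at hτ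
    have key : ∀ y : V, y ∈ S ↔ τ y ∈ S := by
      intro y
      constructor
      · intro hy; rw [hτ y hy]; exact hy
      · intro hy
        have h2 : τ (τ y) = τ y := hτ _ hy
        have := τ.injective h2
        rwa [← this]
    simpa using (not_congr (key x)).symm
  · intros; exact Finset.mem_univ _
  · intro σ _
    simp only [Finset.mem_filter, Finset.mem_univ, true_and]
    intro a ha
    exact Equiv.Perm.ofSubtype_apply_of_not_mem σ (by simpa using ha)
  · intro τ hτ
    simp only [Finset.mem_filter, Finset.mem_univ, true_and] at hτ
    apply Equiv.Perm.ofSubtype_subtypePerm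
    intro x hx
    intro hxS
    exact hx (hτ x (by simpa using hxS))
  · intro σ _
    exact Equiv.Perm.subtypePerm_ofSubtype σ
  · intro τ hτ
    simp only [Finset.mem_filter, Finset.mem_univ, true_and] at hτ
    rw [Finset.prod_subtype Sᶜ hp (fun i => M i (τ i))]
    rfl

lemma sum_fixing_eq_psi (A : Matrix V V (Polynomial R)) (S : Finset V) {Sc : Set V}
    (h : Sc = ↑S) {ft : Fintype {w : V // w ∉ Sc}} {de : DecidableEq {w : V // w ∉ Sc}} :
    ∑ τ ∈ Finset.univ.filter (fun τ : Equiv.Perm V => ∀ a ∈ S, τ a = a),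
      ∏ i ∈ Sᶜ, ((Polynomial.X : Polynomial R) • (1 : Matrix V V (Polynomial R)) - A) i (τ i)
      = @psi _ R ft de _ (delSub A Sc) := by
  subst h
  exact ((sum_fixing_eq_per _ S).trans (per_irrel _)).trans
    ((psi_delSub A (↑S : Set V)).symm.trans (psi_irrel _))
set_option maxHeartbeats 1000000 in
lemma per_eq_sum_vCyc (M : Matrix V V R) (v : V) :
    M.per = ∑ c ∈ Finset.univ.filter (vCyc v),
      (∏ i ∈ insert v c.support, M i (c i)) *
        ∑ τ ∈ Finset.univ.filter (fun τ : Equiv.Perm V => ∀ a ∈ insert v c.support, τ a = a),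
          ∏ i ∈ (insert v c.support)ᶜ, M i (τ i) := by
  classical
  -- push the outer product inside the inner sum
  simp_rw [Finset.mul_sum]
  rw [← Finset.sum_sigma (f := fun x : Σ _ : Equiv.Perm V, Equiv.Perm V =>
    (∏ i ∈ insert v x.1.support, M i (x.1 i)) * ∏ i ∈ (insert v x.1.support)ᶜ, M i (x.2 i))]
  rw [Matrix.per]
  refine (Finset.sum_bij'
    (fun (x : Σ _ : Equiv.Perm V, Equiv.Perm V) _ => x.1 * x.2)
    (fun σ _ => ⟨σ.cycleOf v, (σ.cycleOf v)⁻¹ * σ⟩) ?_ ?_ ?_ ?_ ?_).symm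
  · -- membership: products land in univ
    intros; exact Finset.mem_univ _
  · -- membership: (cycleOf, rest) lands in the sigma set
    intro σ _
    simp only [Finset.mem_sigma, Finset.mem_filter, Finset.mem_univ, true_and]
    constructor
    · by_cases h : σ v = v
      · exact Or.inl ((Equiv.Perm.cycleOf_eq_one_iff σ).2 h)
      · exact Or.inr ⟨Equiv.Perm.isCycle_cycleOf σ h, by rwa [Equiv.Perm.cycleOf_apply_self]⟩
    · intro a ha
      rcases Finset.mem_insert.1 ha with rfl | ha
      · rw [Equiv.Perm.mul_apply, Equiv.Perm.inv_eq_iff_eq, Equiv.Perm.cycleOf_apply_self]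
      · rw [Equiv.Perm.mem_support_cycleOf_iff] at ha
        have h2 : σ.cycleOf v a = σ a := Equiv.Perm.SameCycle.cycleOf_apply ha.1
        rw [Equiv.Perm.mul_apply, Equiv.Perm.inv_eq_iff_eq, h2]
  · -- right inverse
    intro x hx
    simp only [Finset.mem_sigma, Finset.mem_filter, Finset.mem_univ, true_and] at hx
    obtain ⟨hc, hτ⟩ := hx
    have hτv : x.2 v = v := hτ v (Finset.mem_insert_self _ _)
    have hcyc : (x.1 * x.2).cycleOf v = x.1 := by
      rcases hc with h1 | ⟨hcy, hcv⟩
      · rw [h1, one_mul, Equiv.Perm.cycleOf_eq_one_iff]; exact hτv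
      · have hdisj : x.1.Disjoint x.2 := by
          intro a
          by_cases ha : a ∈ x.1.support
          · exact Or.inr (hτ a (Finset.mem_insert_of_mem ha))
          · exact Or.inl (Equiv.Perm.notMem_support.1 ha)
        rw [Equiv.Perm.cycleOf_mul_of_apply_right_eq_self hdisj.commute v hτv]
        exact hcy.cycleOf_eq hcv
    ext <;> simp [hcyc]
  · -- left inverse
    intro σ _
    simp [mul_inv_cancel_left]
  · -- values agree
    intro x hx
    simp only [Finset.mem_sigma, Finset.mem_filter, Finset.mem_univ, true_and] at hx
    obtain ⟨hc, hτ⟩ := hx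
    rw [← Finset.prod_mul_prod_compl (insert v x.1.support)]
    congr 1
    · refine Finset.prod_congr rfl fun i hi => ?_
      rw [Equiv.Perm.mul_apply, hτ i hi]
    · refine Finset.prod_congr rfl fun i hi => ?_
      rw [Finset.mem_compl] at hi
      have hτi : x.2 i ∉ insert v x.1.support := by
        intro h
        have := hτ _ h
        exact hi (by rwa [x.2.injective this] at h)
      have : x.1 (x.2 i) = x.2 i :=
        Equiv.Perm.notMem_support.1 fun h => hτi (Finset.mem_insert_of_mem h)
      rw [Equiv.Perm.mul_apply, this]
end Part1
section Graph

lemma perm_apply_inv_self' {α : Type*} (f : Equiv.Perm α) (x : α) : f (f⁻¹ x) = x :=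
  Equiv.apply_symm_apply f x

lemma perm_inv_apply_self' {α : Type*} (f : Equiv.Perm α) (x : α) : f⁻¹ (f x) = x :=
  Equiv.symm_apply_apply f x

open Equiv Equiv.Perm Finset

variable {V : Type*} [Fintype V] [DecidableEq V]

/-- The subgraph traced out by a permutation. -/
def permSub (G : SimpleGraph V) (c : Equiv.Perm V) : G.Subgraph where
  verts := ↑c.support
  Adj x y := (c x = y ∨ c y = x) ∧ G.Adj x y
  adj_sub h := h.2
  edge_vert {x y} h := by
    rcases h.1 with h1 | h1
    · exact Equiv.Perm.mem_support.2 (by rw [h1]; exact h.2.ne')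
    · have hy : y ∈ c.support := Equiv.Perm.mem_support.2 (by rw [h1]; exact h.2.ne)
      have := Equiv.Perm.apply_mem_support.2 hy
      rwa [h1] at this
  symm := ⟨fun x y h => ⟨h.1.symm, h.2.symm⟩⟩

variable {G : SimpleGraph V}

lemma permSub_verts (c : Equiv.Perm V) : (permSub G c).verts = ↑c.support := rfl

lemma permSub_adj (c : Equiv.Perm V) (x y : V) :
    (permSub G c).Adj x y ↔ (c x = y ∨ c y = x) ∧ G.Adj x y := Iff.rfl

lemma permSub_inv (c : Equiv.Perm V) : permSub G c⁻¹ = permSub G c := by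
  refine SimpleGraph.Subgraph.ext ?_ ?_
  · simp [permSub_verts, Equiv.Perm.support_inv]
  · ext x y
    rw [permSub_adj, permSub_adj]
    constructor
    · rintro ⟨h1 | h1, h2⟩
      · exact ⟨Or.inr (by rw [← h1]; simp), h2⟩
      · exact ⟨Or.inl (by rw [← h1]; simp), h2⟩
    · rintro ⟨h1 | h1, h2⟩
      · exact ⟨Or.inr (by rw [← h1]; simp), h2⟩
      · exact ⟨Or.inl (by rw [← h1]; simp), h2⟩

/-- Goodness of a cycle permutation w.r.t. `G` and a vertex `v`. -/
def goodCyc (G : SimpleGraph V) (v : V) (c : Equiv.Perm V) : Prop :=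
  c.IsCycle ∧ v ∈ c.support ∧ 3 ≤ c.support.card ∧ ∀ i ∈ c.support, G.Adj i (c i)

lemma goodCyc.adj' {v : V} {c : Equiv.Perm V} (hc : goodCyc G v c) {x : V}
    (hx : x ∈ c.support) : G.Adj x (c x) := hc.2.2.2 x hx

lemma goodCyc.inv {v : V} {c : Equiv.Perm V} (hc : goodCyc G v c) : goodCyc G v c⁻¹ := by
  obtain ⟨h1, h2, h3, h4⟩ := hc
  refine ⟨h1.inv, ?_, ?_, ?_⟩
  · rwa [Equiv.Perm.support_inv]
  · rwa [Equiv.Perm.support_inv]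
  · intro i hi
    rw [Equiv.Perm.support_inv] at hi
    have hi' : c⁻¹ i ∈ c.support := by
      rw [← Equiv.Perm.apply_mem_support (f := c), perm_apply_inv_self']; exact hi
    have := h4 _ hi'
    rw [perm_apply_inv_self'] at this
    exact this.symm

lemma goodCyc.sq_apply_ne {v : V} {c : Equiv.Perm V} (hc : goodCyc G v c) {x : V}
    (hx : x ∈ c.support) : c (c x) ≠ x := by
  intro h
  have hxne : c x ≠ x := Equiv.Perm.mem_support.1 hx
  have h2 : (c ^ 2) x = x := by
    rw [pow_two]; exact h
  have : c ^ 2 = 1 := (hc.1.pow_eq_one_iff' hxne).2 h2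
  have hdvd : orderOf c ∣ 2 := orderOf_dvd_of_pow_eq_one this
  have hord : orderOf c = c.support.card := hc.1.orderOf
  have h2' := Nat.le_of_dvd (by norm_num) hdvd
  have h3 := hc.2.2.1
  rw [hord] at h2'
  omega

lemma goodCyc.neighborSet {v : V} {c : Equiv.Perm V} (hc : goodCyc G v c) {x : V}
    (hx : x ∈ c.support) : (permSub G c).neighborSet x = {c x, c⁻¹ x} := by
  ext y
  simp only [SimpleGraph.Subgraph.mem_neighborSet, permSub_adj, Set.mem_insert_iff,
    Set.mem_singleton_iff]
  constructor
  · rintro ⟨h1 | h1, _⟩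
    · exact Or.inl h1.symm
    · exact Or.inr (by rw [← h1]; simp)
  · rintro (rfl | rfl)
    · exact ⟨Or.inl rfl, hc.adj' hx⟩
    · have hx' : c⁻¹ x ∈ c.support := by
        rw [← Equiv.Perm.apply_mem_support (f := c), perm_apply_inv_self']; exact hx
      refine ⟨Or.inr (by simp), ?_⟩
      have := hc.adj' hx'
      rw [perm_apply_inv_self'] at this
      exact this.symm

lemma goodCyc.pow_mem_support {v : V} {c : Equiv.Perm V} (hc : goodCyc G v c) (k : ℕ) :
    (c ^ k) v ∈ c.support := Equiv.Perm.pow_apply_mem_support.2 hc.2.1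

lemma goodCyc.isCycleSub {v : V} {c : Equiv.Perm V} (hc : goodCyc G v c) :
    IsCycleSub G (permSub G c) ∧ v ∈ (permSub G c).verts := by
  have hv : v ∈ (permSub G c).verts := by rw [permSub_verts]; exact_mod_cast hc.2.1
  refine ⟨⟨?_, ⟨v, hv⟩, ?_⟩, hv⟩
  · -- connectivity
    rw [SimpleGraph.Subgraph.connected_iff]
    refine ⟨?_, ⟨v, hv⟩⟩
    have hmem : ∀ k : ℕ, (c ^ k) v ∈ (permSub G c).verts := by
      intro k; rw [permSub_verts]; exact_mod_cast hc.pow_mem_support k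
    have key : ∀ k : ℕ, (permSub G c).coe.Reachable ⟨v, hv⟩ ⟨(c ^ k) v, hmem k⟩ := by
      intro k
      induction k with
      | zero =>
        have h0 : (⟨(c ^ 0) v, hmem 0⟩ : (permSub G c).verts) = ⟨v, hv⟩ :=
          Subtype.ext (by simp)
        rw [h0]
      | succ n ih =>
        refine ih.trans (SimpleGraph.Adj.reachable ?_)
        rw [SimpleGraph.Subgraph.coe_adj]
        show (permSub G c).Adj ((c ^ n) v) ((c ^ (n + 1)) v)
        have hstep : c ((c ^ n) v) = (c ^ (n + 1)) v := by
          rw [pow_succ', Equiv.Perm.mul_apply]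
        refine ⟨Or.inl hstep, ?_⟩
        have := hc.adj' (hc.pow_mem_support n)
        rwa [hstep] at this
    constructor
    rintro ⟨x, hxm⟩ ⟨y, hym⟩
    have hx : x ∈ c.support := by rw [permSub_verts] at hxm; exact_mod_cast hxm
    have hy : y ∈ c.support := by rw [permSub_verts] at hym; exact_mod_cast hym
    obtain ⟨i, hi⟩ := hc.1.exists_pow_eq (Equiv.Perm.mem_support.1 hc.2.1)
      (Equiv.Perm.mem_support.1 hx)
    obtain ⟨j, hj⟩ := hc.1.exists_pow_eq (Equiv.Perm.mem_support.1 hc.2.1)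
      (Equiv.Perm.mem_support.1 hy)
    have ex : (⟨x, hxm⟩ : (permSub G c).verts) = ⟨(c ^ i) v, hmem i⟩ := Subtype.ext hi.symm
    have ey : (⟨y, hym⟩ : (permSub G c).verts) = ⟨(c ^ j) v, hmem j⟩ := Subtype.ext hj.symm
    rw [ex, ey]
    exact (key i).symm.trans (key j)
  · -- degrees
    intro w hw
    have hw' : w ∈ c.support := by rwa [permSub_verts, Finset.mem_coe] at hw
    rw [hc.neighborSet hw']
    refine Set.ncard_pair ?_
    intro h
    have : c (c w) = w := by
      conv_rhs => rw [← perm_apply_inv_self' c w]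
      rw [h]
    exact hc.sq_apply_ne hw' this

lemma pow_succ_apply (c : Equiv.Perm V) (n : ℕ) (x : V) :
    (c ^ (n + 1)) x = c ((c ^ n) x) := by
  rw [pow_succ', Equiv.Perm.mul_apply]

lemma goodCyc.eq_of_permSub_eq {v : V} {c c' : Equiv.Perm V} (hc : goodCyc G v c)
    (hc' : goodCyc G v c') (hsub : permSub G c = permSub G c') (hvv : c' v = c v) :
    c' = c := by
  have hsupp : c'.support = c.support := by
    have := congrArg SimpleGraph.Subgraph.verts hsub
    rw [permSub_verts, permSub_verts] at this
    exact (Finset.coe_injective this).symm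
  have N : ∀ a ∈ c.support, c' a = c a ∨ c' a = c⁻¹ a := by
    intro a ha
    have hadj : (permSub G c').Adj a (c' a) :=
      ⟨Or.inl rfl, hc'.adj' (by rwa [hsupp])⟩
    rw [← hsub] at hadj
    rcases hadj.1 with h1 | h1
    · exact Or.inl h1.symm
    · exact Or.inr (Equiv.Perm.inv_eq_iff_eq.mpr h1.symm).symm
  have P : ∀ n : ℕ, (c' ^ n) v = (c ^ n) v ∧ (c' ^ (n + 1)) v = (c ^ (n + 1)) v := by
    intro n
    induction n with
    | zero => simpa using hvv
    | succ n ih =>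
      obtain ⟨p1, p2⟩ := ih
      refine ⟨p2, ?_⟩
      set b := (c ^ (n + 1)) v with hb
      have hbs : b ∈ c.support := hc.pow_mem_support (n + 1)
      have hcb : (c' ^ (n + 2)) v = c' b := by
        rw [pow_succ_apply, p2]
      rcases N b hbs with h | h
      · rw [hcb, h, ← pow_succ_apply]
      · exfalso
        have h1 : c⁻¹ b = (c ^ n) v := by
          rw [hb, pow_succ_apply, perm_inv_apply_self']
        have h2 : c'⁻¹ b = (c' ^ n) v := by
          rw [← p2, pow_succ_apply, perm_inv_apply_self']
        have h3 : c' b = c'⁻¹ b := by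
          rw [h, h1, h2, p1]
        have : c' (c' b) = b := by
          rw [h3, perm_apply_inv_self']
        exact hc'.sq_apply_ne (by rwa [hsupp]) this
  ext x
  by_cases hx : x ∈ c.support
  · obtain ⟨i, hi⟩ := hc.1.exists_pow_eq (Equiv.Perm.mem_support.1 hc.2.1)
      (Equiv.Perm.mem_support.1 hx)
    have : c' x = (c' ^ (i + 1)) v := by rw [pow_succ_apply, (P i).1, hi]
    rw [this, (P i).2, pow_succ_apply, hi]
  · have h1 : c x = x := Equiv.Perm.notMem_support.1 hx
    have h2 : c' x = x := Equiv.Perm.notMem_support.1 (by rwa [hsupp])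
    rw [h1, h2]
lemma exists_goodCyc {v : V} {C : G.Subgraph} (hC : IsCycleSub G C) (hv : v ∈ C.verts) :
    ∃ c : Equiv.Perm V, goodCyc G v c ∧ permSub G c = C := by
  classical
  obtain ⟨hconn, -, hdeg⟩ := hC
  -- choice of the two neighbours of each vertex
  have hnb : ∀ a, a ∈ C.verts → ∃ p : V × V, p.1 ≠ p.2 ∧ C.neighborSet a = {p.1, p.2} := by
    intro a ha
    obtain ⟨x, y, hxy, h⟩ := Set.ncard_eq_two.1 (hdeg a ha)
    exact ⟨(x, y), hxy, h⟩
  set nbp : V → V × V := fun a => if h : a ∈ C.verts then (hnb a h).choose else (a, a) with hnbp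
  have hnbp1 : ∀ a, a ∈ C.verts → (nbp a).1 ≠ (nbp a).2 := by
    intro a ha; rw [hnbp]; simp only [dif_pos ha]; exact (hnb a ha).choose_spec.1
  have hnbp2 : ∀ a, a ∈ C.verts → C.neighborSet a = {(nbp a).1, (nbp a).2} := by
    intro a ha; rw [hnbp]; simp only [dif_pos ha]; exact (hnb a ha).choose_spec.2
  set other : V → V → V := fun a b => if b = (nbp a).1 then (nbp a).2 else (nbp a).1
    with hother
  have hmemnb : ∀ a b, C.Adj a b → (b = (nbp a).1 ∨ b = (nbp a).2) := by
    intro a b hab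
    have hb : b ∈ C.neighborSet a := hab
    rw [hnbp2 a hab.fst_mem] at hb
    simpa using hb
  have f1 : ∀ a b, C.Adj a b → C.Adj a (other a b) := by
    intro a b hab
    have : other a b ∈ C.neighborSet a := by
      rw [hnbp2 a hab.fst_mem, hother]
      by_cases h : b = (nbp a).1 <;> simp [h]
    exact this
  have f2 : ∀ a b, C.Adj a b → other a b ≠ b := by
    intro a b hab
    rcases hmemnb a b hab with h | h
    · rw [hother]; simp only [if_pos h]; rw [h]; exact (hnbp1 a hab.fst_mem).symm
    · have hb1 : b ≠ (nbp a).1 := fun hb => (hnbp1 a hab.fst_mem) (hb ▸ h.symm ▸ rfl)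
      rw [hother]; simp only [if_neg hb1]; rw [h]; exact hnbp1 a hab.fst_mem
  have f3 : ∀ a b, C.Adj a b → other a (other a b) = b := by
    intro a b hab
    rcases hmemnb a b hab with h | h
    · have e1 : other a b = (nbp a).2 := by simp only [hother]; rw [if_pos h]
      have e2 : other a (nbp a).2 = (nbp a).1 := by
        simp only [hother]; rw [if_neg (Ne.symm (hnbp1 a hab.fst_mem))]
      rw [e1, e2, h]
    · have hb1 : b ≠ (nbp a).1 := fun hb => (hnbp1 a hab.fst_mem) (hb ▸ h.symm ▸ rfl)
      have e1 : other a b = (nbp a).1 := by simp only [hother]; rw [if_neg hb1]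
      have e2 : other a (nbp a).1 = (nbp a).2 := by simp [hother]
      rw [e1, e2, h]
  have f4 : ∀ a b u, C.Adj a b → C.Adj a u → u = b ∨ u = other a b := by
    intro a b u hab hau
    rcases hmemnb a b hab with h | h <;> rcases hmemnb a u hau with h' | h'
    · exact Or.inl (h' ▸ h.symm ▸ rfl)
    · right; rw [hother]; simp [if_pos h, h']
    · right; have hb1 : b ≠ (nbp a).1 := fun hb => (hnbp1 a hab.fst_mem) (hb ▸ h.symm ▸ rfl)
      rw [hother]; simp [if_neg hb1, h']
    · exact Or.inl (h' ▸ h.symm ▸ rfl)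
  -- the step function on directed edges
  set step : V × V → V × V := fun x => (x.2, other x.2 x.1) with hstep
  set Valid : V × V → Prop := fun x => C.Adj x.1 x.2 with hValid
  have hstepv : ∀ x, Valid x → Valid (step x) := by
    intro x hx
    exact f1 x.2 x.1 hx.symm
  have hrev : ∀ x, Valid x → step ((step x).2, (step x).1) = (x.2, x.1) := by
    intro x hx
    show (_, _) = _
    rw [hstep]
    simp only
    rw [f3 x.2 x.1 hx.symm]
  have hinj : ∀ x y, Valid x → Valid y → step x = step y → x = y := by
    intro x y hx hy h
    have h2 : x.2 = y.2 := congrArg Prod.fst h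
    have h1 : other x.2 x.1 = other y.2 y.1 := congrArg Prod.snd h
    have : x.1 = y.1 := by
      have := congrArg (other x.2) h1
      rwa [f3 x.2 x.1 hx.symm, h2, f3 y.2 y.1 hy.symm] at this
    exact Prod.ext this h2
  -- the walk
  set u₀ : V := (nbp v).1 with hu₀
  have hadjvu : C.Adj v u₀ := by
    have : u₀ ∈ C.neighborSet v := by rw [hnbp2 v hv]; exact Or.inl rfl
    exact this
  set w : ℕ → V × V := fun n => step^[n] (v, u₀) with hwdef
  have hw0 : w 0 = (v, u₀) := rfl
  have hws : ∀ n, w (n + 1) = step (w n) := by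
    intro n; rw [hwdef]; simp only; rw [Function.iterate_succ_apply']
  have hwv : ∀ n, Valid (w n) := by
    intro n
    induction n with
    | zero => exact hadjvu
    | succ n ih => rw [hws]; exact hstepv _ ih
  have hwadd : ∀ m n, w (m + n) = step^[m] (w n) := by
    intro m n; rw [hwdef]; simp only; rw [Function.iterate_add_apply]
  have cancel : ∀ k i j, w (k + i) = w (k + j) → w i = w j := by
    intro k
    induction k with
    | zero => intro i j h; simpa using h
    | succ k ih =>
      intro i j h
      have h' : w (k + (i + 1)) = w (k + (j + 1)) := by
        rw [show k + (i + 1) = k + 1 + i by omega, show k + (j + 1) = k + 1 + j by omega]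
        exact h
      have := ih _ _ h'
      rw [hws, hws] at this
      exact hinj _ _ (hwv i) (hwv j) this
  have hex : ∃ n, 0 < n ∧ w n = w 0 := by
    obtain ⟨x, y, hxy, hmap⟩ := Finite.exists_ne_map_eq_of_infinite w
    rcases lt_or_gt_of_ne hxy with hlt | hlt
    · refine ⟨y - x, by omega, cancel x _ _ ?_⟩
      rw [show x + (y - x) = y by omega, add_zero]
      exact hmap.symm
    · refine ⟨x - y, by omega, cancel y _ _ ?_⟩
      rw [show y + (x - y) = x by omega, add_zero]
      exact hmap
  set T : ℕ := Nat.find hex with hTdef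
  have hT0 : 0 < T := (Nat.find_spec hex).1
  have hTw : w T = w 0 := (Nat.find_spec hex).2
  have hTmin : ∀ m, 0 < m → m < T → w m ≠ w 0 := by
    intro m hm hmT h
    exact Nat.find_min hex hmT ⟨hm, h⟩
  have hper : ∀ n, w (n + T) = w n := by
    intro n
    rw [hwadd n T, hTw, ← hwadd n 0, add_zero]
  have hmod : ∀ n, w n = w (n % T) := by
    intro n
    conv_lhs => rw [← Nat.div_add_mod n T]
    generalize n / T = q
    induction q with
    | zero => simp
    | succ q ih =>
      rw [show T * (q + 1) + n % T = (T * q + n % T) + T by ring, hper]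
      exact ih
  have hwinj : ∀ i, i < T → ∀ j, j < T → w i = w j → i = j := by
    have aux : ∀ i j, i < j → j < T → w i ≠ w j := by
      intro i j hij hjT h
      have : w (i + (j - i)) = w (i + 0) := by
        rw [show i + (j - i) = j by omega, add_zero]; exact h.symm
      exact hTmin (j - i) (by omega) (by omega) (cancel i _ _ this)
    intro i hiT j hjT h
    rcases lt_trichotomy i j with hlt | heq | hlt
    · exact absurd h (aux i j hlt hjT)
    · exact heq
    · exact absurd h.symm (aux j i hlt hiT)
  have hkey : ∀ i j, i % T = j % T → w i = w j := by
    intro i j h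
    rw [hmod i, hmod j, h]
  have hkey' : ∀ i j, w i = w j → i % T = j % T := by
    intro i j h
    refine hwinj _ (Nat.mod_lt _ hT0) _ (Nat.mod_lt _ hT0) ?_
    rw [← hmod i, ← hmod j]; exact h
  set a : ℕ → V := fun n => (w n).1 with ha
  have hsnd : ∀ n, (w n).2 = a (n + 1) := by
    intro n; rw [ha]; simp only; rw [hws n, hstep]
  have hadj : ∀ n, C.Adj (a n) (a (n + 1)) := by
    intro n; rw [← hsnd n]; exact hwv n
  -- T is at least 3
  have hT3 : 3 ≤ T := by
    have hT1 : T ≠ 1 := by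
      intro h1
      have hw1 : w 1 = w 0 := by rw [← h1]; exact hTw
      have e1 : (w 1).1 = u₀ := by rw [hws 0, hw0, hstep]
      have e2 : (w 0).1 = v := by rw [hw0]
      rw [hw1, e2] at e1
      exact hadjvu.adj_sub.ne e1
    have hT2 : T ≠ 2 := by
      intro h2
      have hw2 : w 2 = w 0 := by rw [← h2]; exact hTw
      have e1 : (w 2).1 = (w 1).2 := by rw [hws 1, hstep]
      have e2 : (w 1).2 = other u₀ v := by rw [hws 0, hw0, hstep]
      have e3 : (w 2).1 = v := by rw [hw2, hw0]
      exact (f2 u₀ v hadjvu.symm) (by rw [← e2, ← e1, e3])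
    omega
  -- helper: iterated step preserves validity, and is injective on valid states
  have hvalidIter : ∀ n x, Valid x → Valid (step^[n] x) := by
    intro n
    induction n with
    | zero => intro x hx; exact hx
    | succ n ih =>
      intro x hx
      rw [Function.iterate_succ_apply]
      exact ih _ (hstepv x hx)
  have stepcancel : ∀ n x y, Valid x → Valid y → step^[n] x = step^[n] y → x = y := by
    intro n
    induction n with
    | zero => intro x y _ _ h; simpa using h
    | succ n ih =>
      intro x y hx hy h
      rw [Function.iterate_succ_apply, Function.iterate_succ_apply] at h
      exact hinj x y hx hy (ih _ _ (hstepv x hx) (hstepv y hy) h)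
  -- reversal of the walk runs backwards
  have B : ∀ d m, step^[d] ((w (m + d)).2, (w (m + d)).1) = ((w m).2, (w m).1) := by
    intro d
    induction d with
    | zero => intro m; simp
    | succ d ih =>
      intro m
      rw [Function.iterate_succ_apply]
      have hsx : w (m + (d + 1)) = step (w (m + d)) := hws (m + d)
      have hstep1 : step ((w (m + (d + 1))).2, (w (m + (d + 1))).1)
          = ((w (m + d)).2, (w (m + d)).1) := by
        rw [hsx]
        exact hrev (w (m + d)) (hwv (m + d))
      rw [show m + (d + 1) = m + d + 1 from rfl] at hstep1 ⊢
      rw [hstep1]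
      exact ih m
  have hOx : ∀ m, ((w m).2, (w m).1) ≠ w m := by
    intro m hcontra
    have h1 : (w m).2 = (w m).1 := congrArg Prod.fst hcontra
    exact (hwv m).adj_sub.ne' h1
  have hOx2 : ∀ m, ((w m).2, (w m).1) ≠ w (m + 1) := by
    intro m hcontra
    have h1 : (w m).1 = (w (m + 1)).2 := congrArg Prod.snd hcontra
    have h2 : (w (m + 1)).2 = other (w m).2 (w m).1 := by rw [hws m, hstep]
    exact (f2 (w m).2 (w m).1 (hwv m).symm) (h1.trans h2).symm
  -- the vertices a 0, ..., a (T-1) are pairwise distinct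
  have hdista : ∀ i j, i < j → j < T → a i ≠ a j := by
    intro i j hij hjT heq
    by_cases hss : (w i).2 = (w j).2
    · have : i = j := hwinj i (lt_trans hij hjT) j hjT (Prod.ext heq hss)
      omega
    · have hadjxsi : C.Adj (a i) (w i).2 := hwv i
      have hadjxsj : C.Adj (a i) (w j).2 := by
        have := hwv j
        rw [hValid] at this
        rw [heq]
        exact this
      have hjs : w j = step (w (j - 1)) := by rw [← hws (j - 1)]; congr 1; omega
      have hpx : (w (j - 1)).2 = a j := by
        have := hsnd (j - 1)
        rwa [show j - 1 + 1 = j from by omega] at this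
      have hadjpx : C.Adj (w (j - 1)).1 (a j) := by
        have := hwv (j - 1)
        rw [hValid] at this
        rwa [hpx] at this
      have hsj_eq : (w j).2 = other (a j) (w (j - 1)).1 := by
        rw [hjs, hstep]
        simp only
        rw [hpx]
      have hpne : (w (j - 1)).1 ≠ (w j).2 := by
        rw [hsj_eq]
        exact (f2 (a j) (w (j - 1)).1 hadjpx.symm).symm
      have hp_si : (w (j - 1)).1 = (w i).2 := by
        rcases f4 (a i) (w i).2 (w (j - 1)).1 hadjxsi (heq ▸ hadjpx.symm) with h | h
        · exact h
        · rcases f4 (a i) (w i).2 (w j).2 hadjxsi hadjxsj with h' | h'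
          · exact absurd h'.symm hss
          · exact absurd (h.trans h'.symm) hpne
      have hrevij : w (j - 1) = ((w i).2, (w i).1) := by
        refine Prod.ext hp_si ?_
        rw [hpx, ← heq]
      set e : ℕ := (j - 1 - i) / 2 with hedef
      set r : ℕ := (j - 1 - i) % 2 with hrdef
      have h2e : 2 * e + r = j - 1 - i := Nat.div_add_mod (j - 1 - i) 2
      have heT : e * T = e * (T - 1) + e := by
        conv_lhs => rw [show T = (T - 1) + 1 from by omega]
        rw [Nat.mul_succ]
      have hNidx : e * (T - 1) + (j - 1) = (i + e + r) + e * T := by omega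
      set y : V × V := ((w (i + e)).2, (w (i + e)).1) with hydef
      have hvy : Valid y := by
        rw [hydef, hValid]
        exact (hwv (i + e)).symm
      have hBe : step^[e] y = w (j - 1) := by
        rw [hydef, B e i, ← hrevij]
      have hyT : step^[T] y = y := by
        refine stepcancel e _ _ (hvalidIter T _ hvy) hvy ?_
        calc step^[e] (step^[T] y) = step^[e + T] y :=
              (Function.iterate_add_apply step e T y).symm
          _ = step^[T + e] y := by rw [add_comm]
          _ = step^[T] (step^[e] y) := Function.iterate_add_apply step T e y
          _ = step^[T] (w (j - 1)) := by rw [hBe]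
          _ = w (T + (j - 1)) := (hwadd T (j - 1)).symm
          _ = w (j - 1) := by rw [add_comm]; exact hper (j - 1)
          _ = step^[e] y := hBe.symm
      have hyMT : ∀ m, step^[m * T] y = y := by
        intro m
        induction m with
        | zero => simp
        | succ m ih =>
          rw [Nat.succ_mul, Function.iterate_add_apply, hyT, ih]
      have hyrev : y = w (e * (T - 1) + (j - 1)) := by
        calc y = step^[e * T] y := (hyMT e).symm
          _ = step^[e * (T - 1) + e] y := by rw [← heT]
          _ = step^[e * (T - 1)] (step^[e] y) := Function.iterate_add_apply _ _ _ _
          _ = step^[e * (T - 1)] (w (j - 1)) := by rw [hBe]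
          _ = w (e * (T - 1) + (j - 1)) := (hwadd _ _).symm
      have c1 : y ≠ w (i + e) := hOx (i + e)
      have c2 : y ≠ w (i + e + 1) := hOx2 (i + e)
      have hmodeq : w (e * (T - 1) + (j - 1)) = w (i + e + r) := by
        refine hkey _ _ ?_
        rw [hNidx]
        exact Nat.add_mul_mod_self_right (i + e + r) e T
      have hr01 : r = 0 ∨ r = 1 := by omega
      rcases hr01 with hr | hr
      · rw [hr, add_zero] at hmodeq
        exact c1 (hyrev.trans hmodeq)
      · rw [hr] at hmodeq
        exact c2 (hyrev.trans hmodeq)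
  -- the visited vertex set
  set S : Finset V := (Finset.range T).image a with hSdef
  have haS : ∀ n, a n ∈ S := by
    intro n
    rw [hSdef]
    refine Finset.mem_image.2 ⟨n % T, Finset.mem_range.2 (Nat.mod_lt _ hT0), ?_⟩
    exact congrArg Prod.fst (hmod n).symm
  have hSmem : ∀ x, x ∈ S → ∃ n, n < T ∧ a n = x := by
    intro x hx
    rw [hSdef] at hx
    obtain ⟨n, hn, hxe⟩ := Finset.mem_image.1 hx
    exact ⟨n, Finset.mem_range.1 hn, hxe⟩
  have hcardS : S.card = T := by
    rw [hSdef, Finset.card_image_of_injOn, Finset.card_range]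
    intro i hi j hj hij
    by_contra hne
    rcases lt_or_gt_of_ne hne with h | h
    · exact hdista i j h (Finset.mem_range.1 hj) hij
    · exact hdista j i h (Finset.mem_range.1 hi) hij.symm
  have haverts : ∀ n, a n ∈ C.verts := fun n => (hadj n).fst_mem
  have hprev_adj : ∀ n, C.Adj (a n) (a (n + T - 1)) ∧ a (n + T - 1) ≠ a (n + 1) := by
    intro n
    have hTsub : n + T - 1 + 1 = n + T := by omega
    have haT : a (n + T) = a n := congrArg Prod.fst (hper n)
    have h1 : C.Adj (a (n + T - 1)) (a n) := by
      have := hadj (n + T - 1)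
      rw [hTsub, haT] at this
      exact this
    refine ⟨h1.symm, ?_⟩
    have e0 : w (n + T - 1 + 1) = step (w (n + T - 1)) := hws (n + T - 1)
    have e1 : (w (n + T)).2 = other ((w (n + T - 1)).2) ((w (n + T - 1)).1) := by
      conv_lhs => rw [← hTsub, e0]
    have e2 : (w (n + T - 1)).2 = a n := by
      have := hsnd (n + T - 1)
      rw [hTsub] at this
      rw [this, haT]
    have e3 : (w (n + T)).2 = a (n + 1) := by
      have := congrArg Prod.snd (hper n)
      rw [this]
      exact hsnd n
    have e4 : a (n + 1) = other (a n) (a (n + T - 1)) := by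
      rw [← e3, e1, e2]
    intro hcontra
    exact (f2 (a n) (a (n + T - 1)) h1.symm) (hcontra.trans e4).symm
  have hclose : ∀ n u, C.Adj (a n) u → u ∈ S := by
    intro n u hu
    obtain ⟨h1, h2⟩ := hprev_adj n
    rcases f4 (a n) (a (n + 1)) u (hadj n) hu with h | h
    · rw [h]; exact haS (n + 1)
    · rcases f4 (a n) (a (n + 1)) (a (n + T - 1)) (hadj n) h1 with h' | h'
      · exact absurd h' h2
      · rw [h, ← h']; exact haS (n + T - 1)
  have hSverts : ↑S = C.verts := by
    apply Set.Subset.antisymm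
    · intro x hx
      obtain ⟨n, -, hn⟩ := hSmem x hx
      rw [← hn]
      exact haverts n
    · intro y hy
      have hvS : v ∈ S := haS 0
      have walkind : ∀ (x z : C.verts) (q : C.coe.Walk x z), (x : V) ∈ S → (z : V) ∈ S := by
        intro x z q
        induction q with
        | nil => exact id
        | cons hq q ih =>
          intro hxS
          rename_i x' y' z' _
          refine ih ?_
          obtain ⟨n, -, hn⟩ := hSmem _ hxS
          refine hclose n _ ?_
          rw [hn]
          exact hq
      obtain ⟨p⟩ := hconn.coe ⟨v, hv⟩ ⟨y, hy⟩
      exact walkind _ _ p hvS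
  -- construct the permutation
  set f : V → V := fun x => if h : x ∈ S then a ((hSmem x h).choose + 1) else x with hfdef
  have hfnot : ∀ x, x ∉ S → f x = x := fun x h => dif_neg h
  have hfa : ∀ n, n < T → f (a n) = a (n + 1) := by
    intro n hn
    have hmem := haS n
    rw [hfdef]
    simp only [dif_pos hmem]
    obtain ⟨hlt, heqa⟩ := (hSmem (a n) hmem).choose_spec
    have : (hSmem (a n) hmem).choose = n := by
      by_contra hne
      rcases lt_or_gt_of_ne hne with h | h
      · exact hdista _ _ h hn heqa
      · exact hdista _ _ h hlt heqa.symm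
    rw [this]
  have hamod : ∀ n, a (n % T) = a n := fun n => (congrArg Prod.fst (hmod n)).symm
  have hfa' : ∀ n, f (a n) = a (n + 1) := by
    intro n
    have e2 : a (n % T + 1) = a (n + 1) := by
      refine congrArg Prod.fst (hkey _ _ ?_)
      exact Nat.ModEq.add_right 1 (Nat.mod_modEq n T)
    rw [← hamod n, hfa (n % T) (Nat.mod_lt _ hT0), e2]
  have hfinj : Function.Injective f := by
    intro x y hxy
    by_cases hx : x ∈ S <;> by_cases hy : y ∈ S
    · obtain ⟨n, hnT, hn⟩ := hSmem x hx
      obtain ⟨m, hmT, hm⟩ := hSmem y hy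
      rw [← hn, ← hm, hfa n hnT, hfa m hmT] at hxy
      have e1 : a ((n + 1) % T) = a ((m + 1) % T) := by
        rw [hamod (n + 1), hamod (m + 1)]; exact hxy
      have hmodeq : (n + 1) % T = (m + 1) % T := by
        by_contra hne
        rcases lt_or_gt_of_ne hne with h | h
        · exact hdista _ _ h (Nat.mod_lt _ hT0) e1
        · exact hdista _ _ h (Nat.mod_lt _ hT0) e1.symm
      have : n = m := by
        have h2 : n % T = m % T := Nat.ModEq.add_right_cancel' 1 hmodeq
        rwa [Nat.mod_eq_of_lt hnT, Nat.mod_eq_of_lt hmT] at h2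
      rw [← hn, ← hm, this]
    · exfalso
      obtain ⟨n, hnT, hn⟩ := hSmem x hx
      rw [← hn, hfa n hnT, hfnot y hy] at hxy
      exact hy (hxy ▸ haS (n + 1))
    · exfalso
      obtain ⟨m, hmT, hm⟩ := hSmem y hy
      rw [← hm, hfa m hmT, hfnot x hx] at hxy
      exact hx (hxy ▸ haS (m + 1))
    · rwa [hfnot x hx, hfnot y hy] at hxy
  set c : Equiv.Perm V := Equiv.ofBijective f (Finite.injective_iff_bijective.1 hfinj)
    with hcdef
  have hca : ∀ n, c (a n) = a (n + 1) := fun n => hfa' n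
  have hcnot : ∀ x, x ∉ S → c x = x := hfnot
  have hsupport : c.support = S := by
    ext x
    rw [Equiv.Perm.mem_support]
    constructor
    · intro h
      by_contra hx
      exact h (hcnot x hx)
    · intro hx
      obtain ⟨n, hnT, hn⟩ := hSmem x hx
      rw [← hn, hca n]
      intro heq
      have e1 : a ((n + 1) % T) = a n := (hamod (n + 1)).trans heq
      have hlt : (n + 1) % T < T := Nat.mod_lt _ hT0
      have hmeq : (n + 1) % T = n := by
        by_contra hne
        rcases lt_or_gt_of_ne hne with h | h
        · exact hdista _ _ h hnT e1
        · exact hdista _ _ h hlt e1.symm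
      rcases Nat.lt_or_ge (n + 1) T with h | h
      · rw [Nat.mod_eq_of_lt h] at hmeq; omega
      · have hT1 : n + 1 = T := by omega
        rw [hT1, Nat.mod_self] at hmeq
        omega
  have hpow : ∀ k, (c ^ k) v = a k := by
    intro k
    induction k with
    | zero => rw [pow_zero]; rfl
    | succ k ih => rw [pow_succ_apply, ih, hca]
  have hvsupp : v ∈ c.support := by rw [hsupport]; exact haS 0
  have hcyc : c.IsCycle := by
    refine ⟨v, Equiv.Perm.mem_support.1 hvsupp, ?_⟩
    intro y hy
    have hyS : y ∈ S := by rw [← hsupport]; exact Equiv.Perm.mem_support.2 hy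
    obtain ⟨m, hmT, hm⟩ := hSmem y hyS
    exact ⟨(m : ℤ), by rw [zpow_natCast, hpow, hm]⟩
  have hgood : goodCyc G v c := by
    refine ⟨hcyc, hvsupp, ?_, ?_⟩
    · rw [hsupport, hcardS]; exact hT3
    · intro i hi
      rw [hsupport] at hi
      obtain ⟨n, hnT, hn⟩ := hSmem i hi
      rw [← hn, hca n]
      exact (hadj n).adj_sub
  refine ⟨c, hgood, ?_⟩
  refine SimpleGraph.Subgraph.ext ?_ ?_
  · rw [permSub_verts, hsupport, hSverts]
  · ext x y
    rw [permSub_adj]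
    constructor
    · rintro ⟨h1 | h1, hG⟩
      · have hx : x ∈ S := by
          by_contra hx
          rw [hcnot x hx] at h1
          exact hG.ne h1
        obtain ⟨n, hnT, hn⟩ := hSmem x hx
        rw [← h1, ← hn, hca n]
        exact hadj n
      · have hy : y ∈ S := by
          by_contra hy
          rw [hcnot y hy] at h1
          exact hG.ne' h1
        obtain ⟨n, hnT, hn⟩ := hSmem y hy
        have : C.Adj y x := by
          rw [← h1, ← hn, hca n]
          exact hadj n
        exact this.symm
    · intro hC
      have hGxy : G.Adj x y := hC.adj_sub
      have hx : x ∈ S := by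
        have := hC.fst_mem
        rw [← hSverts] at this
        exact_mod_cast this
      obtain ⟨n, hnT, hn⟩ := hSmem x hx
      have h1 := (hprev_adj n).1
      have hC' : C.Adj (a n) y := hn ▸ hC
      rcases f4 (a n) (a (n + 1)) y (hadj n) hC' with h | h
      · exact ⟨Or.inl (by rw [← hn, hca n, ← h]), hGxy⟩
      · rcases f4 (a n) (a (n + 1)) (a (n + T - 1)) (hadj n) h1 with h' | h'
        · exact absurd h' (hprev_adj n).2
        · have hy : y = a (n + T - 1) := by rw [h, h']
          refine ⟨Or.inr ?_, hGxy⟩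
          rw [hy, hca (n + T - 1), show n + T - 1 + 1 = n + T from by omega, ← hn]
          exact congrArg Prod.fst (hper n)
lemma subgraph_finite : Finite G.Subgraph := by
  refine Finite.of_injective
    (fun C => ((C.verts, fun p : V × V => C.Adj p.1 p.2) : Set V × Set (V × V))) ?_
  intro C D h
  refine SimpleGraph.Subgraph.ext (congrArg Prod.fst h) ?_
  have h2 := congrArg Prod.snd h
  simp only at h2
  ext x y
  exact Set.ext_iff.1 h2 (x, y)

lemma fiber_eq_pair {v : V} {C : G.Subgraph} {c₀ : Equiv.Perm V} (hgood : goodCyc G v c₀)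
    (hpc : permSub G c₀ = C) :
    (Finset.univ.filter (goodCyc G v)).filter (fun c => permSub G c = C) = {c₀, c₀⁻¹} := by
  ext c
  simp only [Finset.mem_filter, Finset.mem_univ, true_and, Finset.mem_insert,
    Finset.mem_singleton]
  constructor
  · rintro ⟨hc, hpcc⟩
    have hpeq : permSub G c₀ = permSub G c := by rw [hpc, hpcc]
    have hadjv : (permSub G c₀).Adj v (c v) := by
      rw [hpeq]
      exact ⟨Or.inl rfl, hc.adj' hc.2.1⟩
    rcases hadjv.1 with h | h
    · exact Or.inl (hgood.eq_of_permSub_eq hc hpeq h.symm)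
    · have hvv : c v = c₀⁻¹ v := (Equiv.Perm.inv_eq_iff_eq.mpr h.symm).symm
      refine Or.inr (goodCyc.eq_of_permSub_eq hgood.inv hc ?_ hvv)
      rw [permSub_inv]
      exact hpeq
  · rintro (rfl | rfl)
    · exact ⟨hgood, hpc⟩
    · exact ⟨hgood.inv, by rw [permSub_inv]; exact hpc⟩

lemma fiber_card_two {v : V} {C : G.Subgraph} {c₀ : Equiv.Perm V} (hgood : goodCyc G v c₀)
    (hpc : permSub G c₀ = C) :
    ((Finset.univ.filter (goodCyc G v)).filter (fun c => permSub G c = C)).card = 2 := by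
  rw [fiber_eq_pair hgood hpc]
  rw [Finset.card_insert_of_notMem, Finset.card_singleton]
  rw [Finset.mem_singleton]
  intro h
  have : c₀ (c₀ v) = v := by
    nth_rewrite 1 [h]
    exact perm_inv_apply_self' _ _
  exact hgood.sq_apply_ne hgood.2.1 this
end Graph
open Equiv Equiv.Perm Finset in
set_option maxHeartbeats 2000000 in
theorem adjacency_permanental_vertex_recursion
    {V : Type*} [Fintype V] [DecidableEq V]
    (G : SimpleGraph V) [DecidableRel G.Adj] (v : V) :
    psi (G.adjMatrix (Polynomial ℤ)) =
      Polynomial.X * psi (delSub (G.adjMatrix (Polynomial ℤ)) {v})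
        + ∑ u ∈ G.neighborFinset v, psi (delSub (G.adjMatrix (Polynomial ℤ)) {u, v})
        + 2 * ∑ᶠ C ∈ {C : G.Subgraph | IsCycleSub G C ∧ v ∈ C.verts},
          (-1 : Polynomial ℤ) ^ C.verts.ncard * psi (delSub (G.adjMatrix (Polynomial ℤ)) C.verts) := by
  classical
  set A : Matrix V V (Polynomial ℤ) := G.adjMatrix (Polynomial ℤ) with hAdef
  set M : Matrix V V (Polynomial ℤ) := (Polynomial.X : Polynomial ℤ) • 1 - A with hMdef
  have hMapply : ∀ i j : V, M i j = (if i = j then (Polynomial.X : Polynomial ℤ) else 0) -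
      (if G.Adj i j then 1 else 0) := by
    intro i j
    rw [hMdef]
    by_cases h : i = j <;>
      simp [Matrix.sub_apply, Matrix.smul_apply, Matrix.one_apply, h, hAdef]
  have h1 : psi A = ∑ c ∈ Finset.univ.filter (vCyc v),
      (∏ i ∈ insert v c.support, M i (c i)) * psi (delSub A ↑(insert v c.support)) := by
    rw [psi, ← hMdef, per_eq_sum_vCyc M v]
    refine Finset.sum_congr rfl fun c _ => ?_
    rw [hMdef]
    exact congrArg (fun z => (∏ i ∈ insert v c.support,
      ((Polynomial.X : Polynomial ℤ) • (1 : Matrix V V (Polynomial ℤ)) - A) i (c i)) * z)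
      (sum_fixing_eq_psi A (insert v c.support) rfl)
  rw [h1]
  rw [← Finset.sum_filter_add_sum_filter_not (Finset.univ.filter (vCyc v)) (fun c => c = 1)]
  -- the identity term
  have hx1 : (Finset.univ.filter (vCyc v)).filter (fun c => c = 1) = {(1 : Equiv.Perm V)} := by
    ext c
    simp only [Finset.mem_filter, Finset.mem_univ, true_and, Finset.mem_singleton]
    exact ⟨fun h => h.2, fun h => ⟨Or.inl h, h⟩⟩
  have hterm1 : ∑ c ∈ (Finset.univ.filter (vCyc v)).filter (fun c => c = 1),
      (∏ i ∈ insert v c.support, M i (c i)) * psi (delSub A ↑(insert v c.support))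
      = Polynomial.X * psi (delSub A {v}) := by
    rw [hx1, Finset.sum_singleton, Equiv.Perm.support_one]
    rw [show insert v (∅ : Finset V) = {v} from rfl, Finset.prod_singleton]
    have hMvv : M v ((1 : Equiv.Perm V) v) = Polynomial.X := by
      rw [show (1 : Equiv.Perm V) v = v from rfl, hMapply]
      simp
    rw [hMvv]
    exact congrArg (fun z => Polynomial.X * z) (psi_delSub_congr A (Finset.coe_singleton v))
  rw [hterm1]
  -- the remaining cycles
  have hx2 : (Finset.univ.filter (vCyc v)).filter (fun c => ¬c = 1)
      = Finset.univ.filter (fun c : Equiv.Perm V => c.IsCycle ∧ c v ≠ v) := by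
    ext c
    simp only [Finset.mem_filter, Finset.mem_univ, true_and]
    constructor
    · rintro ⟨h | h, hne⟩
      · exact absurd h hne
      · exact h
    · rintro ⟨hcyc, hcv⟩
      exact ⟨Or.inr ⟨hcyc, hcv⟩, hcyc.ne_one⟩
  rw [hx2]
  rw [← Finset.sum_filter_add_sum_filter_not
    (Finset.univ.filter (fun c : Equiv.Perm V => c.IsCycle ∧ c v ≠ v))
    (fun c => #c.support = 2)]
  -- swap terms
  have hcs : ∀ c : Equiv.Perm V, c.IsCycle → c v ≠ v → #c.support = 2 →
      c = Equiv.swap v (c v) := by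
    intro c _ hv h2
    obtain ⟨x, y, hxy, hcxy⟩ := Equiv.Perm.card_support_eq_two.1 h2
    subst hcxy
    rcases eq_or_ne v x with rfl | hvx
    · rw [Equiv.swap_apply_left]
    · rcases eq_or_ne v y with rfl | hvy
      · rw [Equiv.swap_apply_right, Equiv.swap_comm]
      · exact absurd (Equiv.swap_apply_of_ne_of_ne hvx hvy) hv
  have hprodswap : ∀ u : V, u ≠ v →
      (∏ i ∈ insert v (Equiv.swap v u).support, M i (Equiv.swap v u i))
        = if G.Adj v u then 1 else 0 := by
    intro u hu
    rw [Equiv.Perm.support_swap (Ne.symm hu),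
      show insert v ({v, u} : Finset V) = {v, u} from
        Finset.insert_eq_self.mpr (Finset.mem_insert_self v {u}),
      show ({v, u} : Finset V) = insert v {u} from rfl,
      Finset.prod_insert (by simp [Ne.symm hu]), Finset.prod_singleton,
      Equiv.swap_apply_left, Equiv.swap_apply_right,
      hMapply, hMapply, if_neg (Ne.symm hu), if_neg hu]
    by_cases h : G.Adj v u
    · rw [if_pos h, if_pos (h.symm)]; ring
    · rw [if_neg h, if_neg (fun h' : G.Adj u v => h h'.symm)]; ring
  have hcoeswap : ∀ u : V, u ≠ v →
      (↑(insert v (Equiv.swap v u).support) : Set V) = ({u, v} : Set V) := by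
    intro u hu
    rw [Equiv.Perm.support_swap (Ne.symm hu),
      show insert v ({v, u} : Finset V) = {v, u} from
        Finset.insert_eq_self.mpr (Finset.mem_insert_self v {u})]
    simp [Set.pair_comm]
  have hswapsum : ∑ c ∈ (Finset.univ.filter
        (fun c : Equiv.Perm V => c.IsCycle ∧ c v ≠ v)).filter (fun c => #c.support = 2),
      (∏ i ∈ insert v c.support, M i (c i)) * psi (delSub A ↑(insert v c.support))
      = ∑ u ∈ G.neighborFinset v, psi (delSub A {u, v}) := by
    have step1 : ∑ c ∈ (Finset.univ.filter
        (fun c : Equiv.Perm V => c.IsCycle ∧ c v ≠ v)).filter (fun c => #c.support = 2),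
        (∏ i ∈ insert v c.support, M i (c i)) * psi (delSub A ↑(insert v c.support))
        = ∑ u ∈ Finset.univ.filter (fun u : V => u ≠ v),
            (if G.Adj v u then 1 else 0) * psi (delSub A {u, v}) := by
      refine Finset.sum_bij' (fun c _ => c v) (fun u _ => Equiv.swap v u) ?_ ?_ ?_ ?_ ?_
      · intro c hc
        simp only [Finset.mem_filter, Finset.mem_univ, true_and] at hc ⊢
        exact hc.1.2
      · intro u hu
        simp only [Finset.mem_filter, Finset.mem_univ, true_and] at hu ⊢
        refine ⟨⟨Equiv.Perm.isCycle_swap (Ne.symm hu), ?_⟩, ?_⟩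
        · rw [Equiv.swap_apply_left]; exact hu
        · rw [Equiv.Perm.support_swap (Ne.symm hu)]
          exact Finset.card_pair (Ne.symm hu)
      · intro c hc
        simp only [Finset.mem_filter, Finset.mem_univ, true_and] at hc
        exact (hcs c hc.1.1 hc.1.2 hc.2).symm
      · intro u hu
        exact Equiv.swap_apply_left v u
      · intro c hc
        simp only [Finset.mem_filter, Finset.mem_univ, true_and] at hc
        have hrw := hcs c hc.1.1 hc.1.2 hc.2
        have h1' : (∏ i ∈ insert v c.support, M i (c i))
            = if G.Adj v (c v) then 1 else 0 := by
          conv_lhs => rw [hrw]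
          exact hprodswap (c v) hc.1.2
        have h2' : psi (delSub A ↑(insert v c.support)) = psi (delSub A {c v, v}) := by
          refine psi_delSub_congr A ?_
          conv_lhs => rw [hrw]
          exact hcoeswap (c v) hc.1.2
        rw [h1', h2']
    rw [step1]
    have step2 : ∀ u ∈ Finset.univ.filter (fun u : V => u ≠ v),
        (if G.Adj v u then (1 : Polynomial ℤ) else 0) * psi (delSub A {u, v})
          = (if G.Adj v u then psi (delSub A {u, v}) else 0) := by
      intro u _
      by_cases h : G.Adj v u <;> simp [h]
    rw [Finset.sum_congr rfl step2]
    rw [Finset.sum_subset (Finset.subset_univ _) (fun u _ hu => ?_)]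
    · rw [← Finset.sum_filter, SimpleGraph.neighborFinset_eq_filter]
    · have : u = v := by
        by_contra h
        exact hu (Finset.mem_filter.2 ⟨Finset.mem_univ _, h⟩)
      rw [this, if_neg (G.irrefl)]
  rw [hswapsum]
  -- big cycles
  have hbig : ∑ c ∈ (Finset.univ.filter
        (fun c : Equiv.Perm V => c.IsCycle ∧ c v ≠ v)).filter (fun c => ¬#c.support = 2),
      (∏ i ∈ insert v c.support, M i (c i)) * psi (delSub A ↑(insert v c.support))
      = 2 * ∑ᶠ C ∈ {C : G.Subgraph | IsCycleSub G C ∧ v ∈ C.verts},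
          (-1 : Polynomial ℤ) ^ C.verts.ncard * psi (delSub A C.verts) := by
    have e1 : ∀ c ∈ (Finset.univ.filter
        (fun c : Equiv.Perm V => c.IsCycle ∧ c v ≠ v)).filter (fun c => ¬#c.support = 2),
        (∏ i ∈ insert v c.support, M i (c i)) * psi (delSub A ↑(insert v c.support))
        = (∏ i ∈ c.support, M i (c i)) * psi (delSub A ↑c.support) := by
      intro c hc
      simp only [Finset.mem_filter, Finset.mem_univ, true_and] at hc
      rw [Finset.insert_eq_self.mpr (Equiv.Perm.mem_support.2 hc.1.2)]
    rw [Finset.sum_congr rfl e1]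
    rw [← Finset.sum_filter_add_sum_filter_not _ (fun c => ∀ i ∈ c.support, G.Adj i (c i))]
    have ebad : ∑ c ∈ ((Finset.univ.filter
        (fun c : Equiv.Perm V => c.IsCycle ∧ c v ≠ v)).filter
          (fun c => ¬#c.support = 2)).filter
            (fun c => ¬∀ i ∈ c.support, G.Adj i (c i)),
        (∏ i ∈ c.support, M i (c i)) * psi (delSub A ↑c.support) = 0 := by
      refine Finset.sum_eq_zero fun c hc => ?_
      simp only [Finset.mem_filter, Finset.mem_univ, true_and, not_forall] at hc
      obtain ⟨i, hi, hnadj⟩ := hc.2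
      rw [Finset.prod_eq_zero hi, zero_mul]
      rw [hMapply, if_neg (fun h => (Equiv.Perm.mem_support.1 hi) h.symm), if_neg hnadj]
      ring
    rw [ebad, add_zero]
    have egood : ((Finset.univ.filter
        (fun c : Equiv.Perm V => c.IsCycle ∧ c v ≠ v)).filter
          (fun c => ¬#c.support = 2)).filter (fun c => ∀ i ∈ c.support, G.Adj i (c i))
        = Finset.univ.filter (goodCyc G v) := by
      ext c
      simp only [Finset.mem_filter, Finset.mem_univ, true_and]
      constructor
      · rintro ⟨⟨⟨hcyc, hcv⟩, hcard⟩, hadj⟩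
        have h2 := Equiv.Perm.two_le_card_support_of_ne_one hcyc.ne_one
        exact ⟨hcyc, Equiv.Perm.mem_support.2 hcv, by omega, hadj⟩
      · rintro ⟨hcyc, hvs, h3, hadj⟩
        exact ⟨⟨⟨hcyc, Equiv.Perm.mem_support.1 hvs⟩, by omega⟩, hadj⟩
    rw [egood]
    have eprod : ∀ c ∈ Finset.univ.filter (goodCyc G v),
        (∏ i ∈ c.support, M i (c i)) * psi (delSub A ↑c.support)
        = (-1 : Polynomial ℤ) ^ (#c.support) * psi (delSub A ↑c.support) := by
      intro c hc
      rw [Finset.mem_filter] at hc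
      congr 1
      rw [← Finset.prod_const]
      refine Finset.prod_congr rfl fun i hi => ?_
      rw [hMapply, if_neg (fun h => (Equiv.Perm.mem_support.1 hi) h.symm),
        if_pos (hc.2.adj' hi)]
      ring
    rw [Finset.sum_congr rfl eprod]
    haveI : Finite G.Subgraph := subgraph_finite (G := G)
    have hfin : {C : G.Subgraph | IsCycleSub G C ∧ v ∈ C.verts}.Finite := Set.toFinite _
    have hmaps : ∀ c ∈ Finset.univ.filter (goodCyc G v), permSub G c ∈ hfin.toFinset := by
      intro c hc
      rw [Set.Finite.mem_toFinset]
      exact (Finset.mem_filter.1 hc).2.isCycleSub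
    rw [← Finset.sum_fiberwise_of_maps_to hmaps]
    have einner : ∀ C ∈ hfin.toFinset,
        (∑ c ∈ (Finset.univ.filter (goodCyc G v)).filter (fun c => permSub G c = C),
          (-1 : Polynomial ℤ) ^ (#c.support) * psi (delSub A ↑c.support))
        = 2 * ((-1 : Polynomial ℤ) ^ C.verts.ncard * psi (delSub A C.verts)) := by
      intro C hC
      rw [Set.Finite.mem_toFinset] at hC
      obtain ⟨c₀, hg0, hp0⟩ := exists_goodCyc hC.1 hC.2
      have hconstant : ∀ c ∈ (Finset.univ.filter (goodCyc G v)).filter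
          (fun c => permSub G c = C),
          (-1 : Polynomial ℤ) ^ (#c.support) * psi (delSub A ↑c.support)
          = (-1 : Polynomial ℤ) ^ C.verts.ncard * psi (delSub A C.verts) := by
        intro c hc
        rw [Finset.mem_filter] at hc
        have hverts : C.verts = ↑c.support := by rw [← hc.2, permSub_verts]
        have hpsi : psi (delSub A C.verts) = psi (delSub A ↑c.support) :=
          psi_delSub_congr A hverts
        rw [hpsi, hverts, Set.ncard_coe_finset]
      rw [Finset.sum_congr rfl hconstant, Finset.sum_const, fiber_card_two hg0 hp0]
      simp [two_mul, two_smul]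
    rw [Finset.sum_congr rfl einner, ← Finset.mul_sum]
    congr 1
    rw [finsum_mem_eq_finite_toFinset_sum _ hfin]
  rw [hbig]
  ring
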